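/- arXiv:2008.03936 — 5 statements merged into one kernel-verified Lean document; each statement's English description precedes it below -/
import Mathlib

section
/- For every real multivariate polynomial p in n variables, there exist a dimension d, an affine map A from ℝ^n to the d×d real matrices whose value A(x) is strictly upper triangular (hence nilpotent) for every input x, a linear functional ℓ on the space of d×d real matrices, and a constant c ∈ ℝ, such that for all x ∈ ℝ^n, ℓ(exp(A(x))) + c = p(x), where exp denotes the matrix exponential. -/
open scoped BigOperators

open Matrix Finset
open scoped Nat

namespace MLayerAux

noncomputable section

variable {n : ℕ}

/-- Strictly upper triangular matrices: entries of powers vanish low. -/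
lemma sut_pow_entry {D : ℕ} (M : Matrix (Fin D) (Fin D) ℝ)
    (h : ∀ i j : Fin D, (j : ℕ) ≤ (i : ℕ) → M i j = 0) :
    ∀ (m : ℕ) (i j : Fin D), (j : ℕ) < (i : ℕ) + m → (M ^ m) i j = 0 := by
  intro m
  induction m with
  | zero =>
    intro i j hij
    simp only [Nat.add_zero] at hij
    rw [pow_zero, Matrix.one_apply_ne]
    intro e; rw [e] at hij; omega
  | succ m ih =>
    intro i j hij
    rw [pow_succ', Matrix.mul_apply]
    refine Finset.sum_eq_zero fun l _ => ?_
    rcases le_or_gt (l : ℕ) (i : ℕ) with hl | hl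
    · rw [h i l hl, zero_mul]
    · rw [ih l j (by omega), mul_zero]

lemma sut_pow_eq_zero {D : ℕ} (M : Matrix (Fin D) (Fin D) ℝ)
    (h : ∀ i j : Fin D, (j : ℕ) ≤ (i : ℕ) → M i j = 0) : M ^ D = 0 := by
  ext i j
  rw [sut_pow_entry M h D i j (by omega)]
  rfl

/-- exponential of a nilpotent element is a finite sum. -/
lemma exp_eq_sum_of_pow_eq_zero {𝔸 : Type*} [Ring 𝔸] [Algebra ℝ 𝔸] [TopologicalSpace 𝔸]
    [IsTopologicalRing 𝔸] [T2Space 𝔸] {M : 𝔸} {D : ℕ} (h : M ^ D = 0) :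
    NormedSpace.exp M = ∑ k ∈ Finset.range D, ((k ! : ℝ)⁻¹) • M ^ k := by
  rw [NormedSpace.exp_eq_tsum ℝ]
  refine tsum_eq_sum fun k hk => ?_
  rw [Finset.mem_range, not_lt] at hk
  rw [← Nat.sub_add_cancel hk, pow_add, h, mul_zero, smul_zero]

/-- powers of a weighted shift matrix. -/
lemma shift_pow (k : ℕ) (v : ℕ → ℝ) (S : Matrix (Fin (k + 1)) (Fin (k + 1)) ℝ)
    (hS : ∀ i j : Fin (k + 1), S i j = if (i : ℕ) + 1 = (j : ℕ) then v i else 0) :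
    ∀ (m : ℕ) (i j : Fin (k + 1)),
      (S ^ m) i j = if (i : ℕ) + m = (j : ℕ) then ∏ t ∈ Finset.range m, v (i + t) else 0 := by
  intro m
  induction m with
  | zero =>
    intro i j
    rw [pow_zero, Matrix.one_apply]
    by_cases hij : i = j
    · subst hij; simp
    · rw [if_neg hij, if_neg (by intro e; exact hij (Fin.ext (by omega)))]
  | succ m ih =>
    intro i j
    rw [pow_succ', Matrix.mul_apply]
    by_cases hi : (i : ℕ) < k
    · have hl0 : ((⟨(i : ℕ) + 1, by omega⟩ : Fin (k + 1)) : ℕ) = (i : ℕ) + 1 := rfl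
      rw [Finset.sum_eq_single (⟨(i : ℕ) + 1, by omega⟩ : Fin (k + 1))]
      · rw [hS, ih, hl0, if_pos rfl]
        by_cases hj : (i : ℕ) + (m + 1) = (j : ℕ)
        · rw [if_pos (by omega), if_pos hj, Finset.prod_range_succ', mul_comm]
          refine congrArg₂ (· * ·) ?_ (by norm_num)
          exact Finset.prod_congr rfl fun t _ => by congr 1; omega
        · rw [if_neg (by omega), mul_zero, if_neg hj]
      · intro l _ hl
        rw [hS, if_neg, zero_mul]
        intro e
        exact hl (Fin.ext (by omega))
      · intro habs
        exact absurd (Finset.mem_univ _) habs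
    · have hi' : (i : ℕ) = k := by omega
      rw [if_neg (by omega)]
      refine Finset.sum_eq_zero fun l _ => ?_
      rw [hS, if_neg (by omega), zero_mul]

/-- The class of functions expressible as `ℓ (exp (A x)) + c`. -/
def Expressible (n : ℕ) (f : (Fin n → ℝ) → ℝ) : Prop :=
  ∃ (d : ℕ) (A : (Fin n → ℝ) →ᵃ[ℝ] Matrix (Fin d) (Fin d) ℝ)
    (ℓ : Matrix (Fin d) (Fin d) ℝ →ₗ[ℝ] ℝ) (c : ℝ),
    (∀ (x : Fin n → ℝ) (i j : Fin d), (j : ℕ) ≤ (i : ℕ) → A x i j = 0) ∧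
    (∀ x : Fin n → ℝ, ℓ (NormedSpace.exp (A x)) + c = f x)

lemma expressible_zero : Expressible n (fun _ => 0) :=
  ⟨0, AffineMap.const ℝ _ 0, 0, 0, fun _ i => absurd i.2 (by omega), fun x => by simp⟩

/-- block-extraction linear maps -/
def blockLin₁₁ {α β : Type*} : Matrix (α ⊕ β) (α ⊕ β) ℝ →ₗ[ℝ] Matrix α α ℝ where
  toFun := Matrix.toBlocks₁₁
  map_add' _ _ := rfl
  map_smul' _ _ := rfl

def blockLin₂₂ {α β : Type*} : Matrix (α ⊕ β) (α ⊕ β) ℝ →ₗ[ℝ] Matrix β β ℝ where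
  toFun := Matrix.toBlocks₂₂
  map_add' _ _ := rfl
  map_smul' _ _ := rfl

def diagBlockLin {α β : Type*} : (Matrix α α ℝ × Matrix β β ℝ) →ₗ[ℝ] Matrix (α ⊕ β) (α ⊕ β) ℝ where
  toFun P := Matrix.fromBlocks P.1 0 0 P.2
  map_add' P Q := by
    ext (i | i) (j | j) <;> simp
  map_smul' r P := by
    ext (i | i) (j | j) <;> simp

lemma fromBlocks_diag_pow {α β : Type*} [Fintype α] [Fintype β] [DecidableEq α] [DecidableEq β]
    (M : Matrix α α ℝ) (N : Matrix β β ℝ) (m : ℕ) :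
    (Matrix.fromBlocks M 0 0 N) ^ m = Matrix.fromBlocks (M ^ m) 0 0 (N ^ m) := by
  induction m with
  | zero => simp [Matrix.fromBlocks_one]
  | succ m ih =>
    rw [pow_succ, pow_succ, pow_succ, ih, Matrix.fromBlocks_multiply]
    simp

lemma expressible_add {f g : (Fin n → ℝ) → ℝ} (hf : Expressible n f) (hg : Expressible n g) :
    Expressible n (fun x => f x + g x) := by
  classical
  obtain ⟨d₁, A₁, l₁, c₁, h₁, H₁⟩ := hf
  obtain ⟨d₂, A₂, l₂, c₂, h₂, H₂⟩ := hg
  set e : Fin d₁ ⊕ Fin d₂ ≃ Fin (d₁ + d₂) := finSumFinEquiv with he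
  set ψ := Matrix.reindexAlgEquiv ℝ ℝ e with hψ
  -- the combined affine map
  let L : (Matrix (Fin d₁) (Fin d₁) ℝ × Matrix (Fin d₂) (Fin d₂) ℝ) →ₗ[ℝ]
      Matrix (Fin (d₁ + d₂)) (Fin (d₁ + d₂)) ℝ := ψ.toLinearMap ∘ₗ diagBlockLin
  let Apair : (Fin n → ℝ) →ᵃ[ℝ] (Matrix (Fin d₁) (Fin d₁) ℝ × Matrix (Fin d₂) (Fin d₂) ℝ) :=
    { toFun := fun x => (A₁ x, A₂ x)
      linear := A₁.linear.prod A₂.linear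
      map_vadd' := by
        intro p v
        have h1 := A₁.map_vadd p v
        have h2 := A₂.map_vadd p v
        simp only [vadd_eq_add] at h1 h2 ⊢
        exact Prod.ext h1 h2 }
  refine ⟨d₁ + d₂, L.toAffineMap.comp Apair,
    (l₁ ∘ₗ blockLin₁₁ ∘ₗ (ψ.symm.toLinearMap)) + (l₂ ∘ₗ blockLin₂₂ ∘ₗ (ψ.symm.toLinearMap)),
    c₁ + c₂, ?_, ?_⟩
  · intro x i j hij
    obtain ⟨si, rfl⟩ := e.surjective i
    obtain ⟨sj, rfl⟩ := e.surjective j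
    have : (L.toAffineMap.comp Apair) x = ψ (Matrix.fromBlocks (A₁ x) 0 0 (A₂ x)) := rfl
    rw [this, hψ, Matrix.reindexAlgEquiv_apply, Matrix.reindex_apply, Matrix.submatrix_apply,
      Equiv.symm_apply_apply, Equiv.symm_apply_apply]
    rcases si with a | a <;> rcases sj with b | b
    · exact h₁ x a b (by simpa [he] using hij)
    · rfl
    · rfl
    · refine h₂ x a b ?_
      have hia : ((e (Sum.inr a) : Fin (d₁ + d₂)) : ℕ) = d₁ + (a : ℕ) := by simp [he]
      have hjb : ((e (Sum.inr b) : Fin (d₁ + d₂)) : ℕ) = d₁ + (b : ℕ) := by simp [he]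
      omega
  · intro x
    have hA : (L.toAffineMap.comp Apair) x = ψ (Matrix.fromBlocks (A₁ x) 0 0 (A₂ x)) := rfl
    set M₁ := A₁ x with hM₁
    set M₂ := A₂ x with hM₂
    have hn₁ : M₁ ^ (d₁ + d₂) = 0 := by
      rw [pow_add, sut_pow_eq_zero M₁ (h₁ x), zero_mul]
    have hn₂ : M₂ ^ (d₁ + d₂) = 0 := by
      rw [pow_add, sut_pow_eq_zero M₂ (h₂ x), mul_zero]
    have hB : (Matrix.fromBlocks M₁ 0 0 M₂ : Matrix (Fin d₁ ⊕ Fin d₂) _ ℝ) ^ (d₁ + d₂) = 0 := by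
      rw [fromBlocks_diag_pow, hn₁, hn₂]
      ext (i | i) (j | j) <;> rfl
    have hψB : (ψ (Matrix.fromBlocks M₁ 0 0 M₂)) ^ (d₁ + d₂) = 0 := by
      rw [← map_pow, hB, map_zero]
    rw [hA, exp_eq_sum_of_pow_eq_zero hψB]
    have key : ∀ m : ℕ, ψ.symm ((ψ (Matrix.fromBlocks M₁ 0 0 M₂)) ^ m)
        = Matrix.fromBlocks (M₁ ^ m) 0 0 (M₂ ^ m) := by
      intro m
      rw [← map_pow, AlgEquiv.symm_apply_apply, fromBlocks_diag_pow]
    rw [LinearMap.add_apply, LinearMap.comp_apply, LinearMap.comp_apply,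
      LinearMap.comp_apply, LinearMap.comp_apply]
    rw [map_sum, map_sum, map_sum, map_sum]
    simp_rw [_root_.map_smul]
    have k₁ : ∀ m : ℕ, blockLin₁₁ (ψ.symm.toLinearMap ((ψ (Matrix.fromBlocks M₁ 0 0 M₂)) ^ m))
        = M₁ ^ m := by
      intro m
      calc blockLin₁₁ (ψ.symm.toLinearMap ((ψ (Matrix.fromBlocks M₁ 0 0 M₂)) ^ m))
          = (ψ.symm ((ψ (Matrix.fromBlocks M₁ 0 0 M₂)) ^ m)).toBlocks₁₁ := rfl
        _ = (Matrix.fromBlocks (M₁ ^ m) 0 0 (M₂ ^ m)).toBlocks₁₁ := by rw [key m]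
        _ = M₁ ^ m := Matrix.toBlocks_fromBlocks₁₁ _ _ _ _
    have k₂ : ∀ m : ℕ, blockLin₂₂ (ψ.symm.toLinearMap ((ψ (Matrix.fromBlocks M₁ 0 0 M₂)) ^ m))
        = M₂ ^ m := by
      intro m
      calc blockLin₂₂ (ψ.symm.toLinearMap ((ψ (Matrix.fromBlocks M₁ 0 0 M₂)) ^ m))
          = (ψ.symm ((ψ (Matrix.fromBlocks M₁ 0 0 M₂)) ^ m)).toBlocks₂₂ := rfl
        _ = (Matrix.fromBlocks (M₁ ^ m) 0 0 (M₂ ^ m)).toBlocks₂₂ := by rw [key m]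
        _ = M₂ ^ m := Matrix.toBlocks_fromBlocks₂₂ _ _ _ _
    simp_rw [k₁, k₂]
    have e₁ : l₁ (NormedSpace.exp M₁)
        = ∑ m ∈ Finset.range (d₁ + d₂), ((m ! : ℝ)⁻¹) • l₁ (M₁ ^ m) := by
      rw [exp_eq_sum_of_pow_eq_zero hn₁, map_sum]
      simp_rw [_root_.map_smul]
    have e₂ : l₂ (NormedSpace.exp M₂)
        = ∑ m ∈ Finset.range (d₁ + d₂), ((m ! : ℝ)⁻¹) • l₂ (M₂ ^ m) := by
      rw [exp_eq_sum_of_pow_eq_zero hn₂, map_sum]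
      simp_rw [_root_.map_smul]
    have hf := H₁ x
    have hg := H₂ x
    rw [e₁] at hf
    rw [e₂] at hg
    simp only [map_sum, _root_.map_smul]
    linarith [hf, hg]

lemma expressible_monomial (e : Fin n →₀ ℕ) (a : ℝ) :
    Expressible n (fun x => MvPolynomial.eval x (MvPolynomial.monomial e a)) := by
  classical
  set l : List (Fin n) := (Finsupp.toMultiset e).toList with hl
  obtain ⟨k, hk⟩ : ∃ k, l.length = k := ⟨l.length, rfl⟩
  -- coordinate linear functionals
  let u : ℕ → ((Fin n → ℝ) →ₗ[ℝ] ℝ) := fun t =>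
    if h : t < l.length then LinearMap.proj (l.get ⟨t, h⟩) else 0
  let L : (Fin n → ℝ) →ₗ[ℝ] Matrix (Fin (k + 1)) (Fin (k + 1)) ℝ :=
    { toFun := fun x => Matrix.of fun i j : Fin (k + 1) =>
        if (i : ℕ) + 1 = (j : ℕ) then u i x else 0
      map_add' := by
        intro x y
        ext i j
        simp only [Matrix.of_apply, Matrix.add_apply]
        split_ifs <;> simp
      map_smul' := by
        intro r x
        ext i j
        simp only [Matrix.of_apply, Matrix.smul_apply, RingHom.id_apply]
        split_ifs <;> simp }
  let last : Fin (k + 1) := ⟨k, by omega⟩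
  let ℓ : Matrix (Fin (k + 1)) (Fin (k + 1)) ℝ →ₗ[ℝ] ℝ :=
    { toFun := fun M => a * (k ! : ℝ) * M 0 last
      map_add' := by intro M N; simp [Matrix.add_apply]; ring
      map_smul' := by intro r M; simp [Matrix.smul_apply]; ring }
  refine ⟨k + 1, L.toAffineMap, ℓ, 0, ?_, ?_⟩
  · intro x i j hij
    show (if (i : ℕ) + 1 = (j : ℕ) then u i x else 0) = 0
    rw [if_neg (by omega)]
  · intro x
    have hS : ∀ i j : Fin (k + 1), (L x) i j
        = if (i : ℕ) + 1 = (j : ℕ) then (fun t => u t x) (i : ℕ) else 0 := fun i j => rfl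
    have hsut : ∀ i j : Fin (k + 1), (j : ℕ) ≤ (i : ℕ) → (L x) i j = 0 := by
      intro i j hij
      rw [hS, if_neg (by omega)]
    have hnil : (L x) ^ (k + 1) = 0 := sut_pow_eq_zero _ hsut
    have hexp : NormedSpace.exp ((L.toAffineMap) x)
        = ∑ m ∈ Finset.range (k + 1), ((m ! : ℝ)⁻¹) • (L x) ^ m := by
      rw [LinearMap.coe_toAffineMap]
      exact exp_eq_sum_of_pow_eq_zero hnil
    rw [hexp, map_sum]
    simp_rw [_root_.map_smul]
    have hpow := shift_pow k (fun t => u t x) (L x) hS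
    have hfac : (k ! : ℝ) ≠ 0 := Nat.cast_ne_zero.mpr (Nat.factorial_ne_zero k)
    have hval : ∀ m ∈ Finset.range (k + 1),
        ((m ! : ℝ)⁻¹) • ℓ ((L x) ^ m)
          = if m = k then a * ∏ t ∈ Finset.range k, u t x else 0 := by
      intro m _
      show ((m ! : ℝ)⁻¹) • (a * (k ! : ℝ) * ((L x) ^ m) 0 last) = _
      rw [hpow m 0 last]
      by_cases hm : m = k
      · subst hm
        rw [if_pos (by simp [last]), if_pos rfl]
        have hre : ∏ t ∈ Finset.range m, (fun t => u t x) (((0 : Fin (m + 1)) : ℕ) + t)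
            = ∏ t ∈ Finset.range m, u t x :=
          Finset.prod_congr rfl fun t _ => by norm_num
        rw [hre, smul_eq_mul]
        field_simp
      · have hcond : ¬(((0 : Fin (k + 1)) : ℕ) + m = (last : ℕ)) := by
          simp only [Fin.val_zero, zero_add]
          exact fun h => hm h
        rw [if_neg hcond, mul_zero, smul_zero, if_neg hm]
    rw [Finset.sum_congr rfl hval, Finset.sum_ite_eq' (Finset.range (k + 1)) k,
      if_pos (by simp)]
    -- now identify the product with the monomial evaluation
    have hprod : ∏ t ∈ Finset.range k, u t x = e.prod fun i c => x i ^ c := by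
      have step1 : ∏ t ∈ Finset.range k, u t x
          = ∏ t : Fin k, x (l.get ⟨t, by rw [hk]; exact t.2⟩) := by
        rw [← Fin.prod_univ_eq_prod_range (fun t => u t x) k]
        refine Finset.prod_congr rfl fun t _ => ?_
        show u (t : ℕ) x = _
        rw [show u (t : ℕ) = LinearMap.proj (l.get ⟨t, by rw [hk]; exact t.2⟩) from
          dif_pos _]
        rfl
      have step2 : (List.map x l).prod
          = ∏ t : Fin k, x (l.get ⟨t, by rw [hk]; exact t.2⟩) := by
        subst hk
        have hmap : List.map x l = List.ofFn (x ∘ l.get) := by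
          rw [← List.map_ofFn, List.ofFn_get]
        rw [hmap, List.prod_ofFn]
        exact Finset.prod_congr rfl fun t _ => rfl
      have step3 : (List.map x l).prod = (Multiset.map x (Finsupp.toMultiset e)).prod := by
        have h0 : (Finsupp.toMultiset e) = (l : Multiset (Fin n)) := by
          rw [hl, Multiset.coe_toList]
        rw [h0, Multiset.map_coe, Multiset.prod_coe]
      rw [step1, ← step2, step3, Finsupp.toMultiset_map, Finsupp.prod_toMultiset]
      exact Finsupp.prod_mapDomain_index (fun b => pow_zero b)
        (fun b m₁ m₂ => pow_add b m₁ m₂)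
    rw [MvPolynomial.eval_monomial, add_zero, hprod]

end

end MLayerAux

/-- For every real multivariate polynomial `p` in `n` variables, there exist a dimension `d`,
an affine map `A : ℝ^n → Matrix (Fin d) (Fin d) ℝ` whose value is strictly upper triangular
for every input, a linear functional `ℓ` on `d × d` matrices, and a constant `c` such that
`ℓ (exp (A x)) + c = p x` for all `x`. -/
theorem mlayer_expresses_polynomials (n : ℕ) (p : MvPolynomial (Fin n) ℝ) :
    ∃ (d : ℕ) (A : (Fin n → ℝ) →ᵃ[ℝ] Matrix (Fin d) (Fin d) ℝ)
      (ℓ : Matrix (Fin d) (Fin d) ℝ →ₗ[ℝ] ℝ) (c : ℝ),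
      (∀ (x : Fin n → ℝ) (i j : Fin d), (j : ℕ) ≤ (i : ℕ) → A x i j = 0) ∧
      (∀ x : Fin n → ℝ, ℓ (NormedSpace.exp (A x)) + c = MvPolynomial.eval x p) := by
  classical
  have key : MLayerAux.Expressible n (fun x => MvPolynomial.eval x p) := by
    have : ∀ s : Finset (Fin n →₀ ℕ), MLayerAux.Expressible n
        (fun x => ∑ e ∈ s, MvPolynomial.eval x (MvPolynomial.monomial e (p.coeff e))) := by
      intro s
      induction s using Finset.induction_on with
      | empty => simpa using MLayerAux.expressible_zero
      | insert _ _ hns ih =>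
        rename_i e s'
        have := MLayerAux.expressible_add (MLayerAux.expressible_monomial e (p.coeff e)) ih
        simpa [Finset.sum_insert hns] using this
    have hp := this p.support
    have : ∀ x : Fin n → ℝ,
        ∑ e ∈ p.support, MvPolynomial.eval x (MvPolynomial.monomial e (p.coeff e))
          = MvPolynomial.eval x p := by
      intro x
      conv_rhs => rw [p.as_sum]
      rw [map_sum]
    simpa [funext this] using hp
  obtain ⟨d, A, ℓ, c, h1, h2⟩ := key
  exact ⟨d, A, ℓ, c, h1, h2⟩
end

section
/- For every continuous function f : [a,b]^n → ℝ^m and every ε > 0, there exist a dimension d, an affine map A from ℝ^n to the d×d real matrices, a linear map L from d×d real matrices to ℝ^m, and a vector v ∈ ℝ^m, such that for all x ∈ [a,b]^n and all coordinates 0 ≤ j < m, |f(x)_j − (L(exp(A(x))) + v)_j| < ε. -/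
open scoped BigOperators

open Submodule in
/-- Key approximation step: each real coordinate function can be approximated uniformly
on the cube by a finite linear combination of exponentials of affine functions. -/
theorem exp_affine_span_approx (n : ℕ) (a b : ℝ) (F : (Fin n → ℝ) → ℝ)
    (hF : ContinuousOn F (Set.pi Set.univ fun _ : Fin n => Set.Icc a b))
    (ε : ℝ) (hε : 0 < ε) :
    ∃ (k : ℕ) (c : Fin k → ℝ) (w : Fin k → Fin n → ℝ) (t : Fin k → ℝ),
      ∀ x ∈ Set.pi Set.univ fun _ : Fin n => Set.Icc a b,
        |F x - ∑ i, c i * Real.exp ((∑ i', w i i' * x i') + t i)| < ε := by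
  classical
  set K : Set (Fin n → ℝ) := Set.pi Set.univ fun _ : Fin n => Set.Icc a b with hK
  have hKc : IsCompact K := isCompact_univ_pi fun _ => isCompact_Icc
  haveI : CompactSpace K := isCompact_iff_compactSpace.mp hKc
  set E : Set C(K, ℝ) :=
    {g | ∃ (w : Fin n → ℝ) (c : ℝ),
      ∀ z : K, g z = Real.exp ((∑ i', w i' * (z : Fin n → ℝ) i') + c)} with hE
  -- E is multiplicatively closed and contains 1, hence a submonoid
  have hone : (1 : C(K, ℝ)) ∈ E := ⟨0, 0, fun z => by simp⟩
  have hmul : ∀ g₁ ∈ E, ∀ g₂ ∈ E, g₁ * g₂ ∈ E := by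
    rintro g₁ ⟨w₁, c₁, h₁⟩ g₂ ⟨w₂, c₂, h₂⟩
    refine ⟨w₁ + w₂, c₁ + c₂, fun z => ?_⟩
    simp only [ContinuousMap.mul_apply, h₁, h₂, ← Real.exp_add, Pi.add_apply, add_mul,
      Finset.sum_add_distrib]
    ring_nf
  let Emon : Submonoid C(K, ℝ) :=
    { carrier := E
      one_mem' := hone
      mul_mem' := fun ha hb => hmul _ ha _ hb }
  -- the adjoin separates points
  have hsep : (Algebra.adjoin ℝ E).SeparatesPoints := by
    intro x y hxy
    have hxy' : (x : Fin n → ℝ) ≠ (y : Fin n → ℝ) := fun h => hxy (Subtype.ext h)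
    obtain ⟨i, hi⟩ : ∃ i, (x : Fin n → ℝ) i ≠ (y : Fin n → ℝ) i := by
      by_contra h
      push_neg at h
      exact hxy' (funext h)
    refine ⟨_, ⟨ContinuousMap.mk (fun z : K => Real.exp ((z : Fin n → ℝ) i)) (Real.continuous_exp.comp ((continuous_apply i).comp continuous_subtype_val)),
      Algebra.subset_adjoin ?_, rfl⟩, ?_⟩
    · refine ⟨Pi.single i 1, 0, fun z => ?_⟩
      simp [Pi.single_apply, Finset.sum_ite_eq']
    · simpa [Real.exp_eq_exp] using hi
  -- continuity of the restriction
  have hFr : Continuous fun z : K => F z := hF.restrict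
  obtain ⟨⟨g, hg⟩, hgF⟩ :=
    ContinuousMap.exists_mem_subalgebra_near_continuous_of_separatesPoints
      (Algebra.adjoin ℝ E) hsep (fun z : K => F z) hFr ε hε
  have hgspan : g ∈ span ℝ (Submonoid.closure E : Set C(K, ℝ)) := by
    have : g ∈ Subalgebra.toSubmodule (Algebra.adjoin ℝ E) := hg
    rwa [Algebra.adjoin_eq_span] at this
  obtain ⟨k, c, y, hy⟩ := mem_span_set'.mp hgspan
  have hyE : ∀ i, ((y i : C(K, ℝ)) ∈ E) := fun i =>
    Submonoid.closure_le.mpr (le_refl (Emon : Set C(K, ℝ))) (y i).2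
  choose w t hwt using fun i => hyE i
  refine ⟨k, c, w, t, fun x hx => ?_⟩
  have hx' : (⟨x, hx⟩ : K) = ⟨x, hx⟩ := rfl
  have := hgF ⟨x, hx⟩
  rw [Real.norm_eq_abs] at this
  have hgx : g ⟨x, hx⟩ = ∑ i, c i * Real.exp ((∑ i', w i i' * x i') + t i) := by
    have := congrArg (fun h : C(K, ℝ) => h ⟨x, hx⟩) hy
    rw [← this]
    rw [ContinuousMap.sum_apply]
    refine Finset.sum_congr rfl fun i _ => ?_
    simp [hwt i ⟨x, hx⟩]
  rw [abs_sub_comm]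
  rw [← hgx]
  exact this

/-- Universal approximation: for every continuous `f : [a,b]^n → ℝ^m` and every `ε > 0`,
there exist a dimension `d`, an affine map `A` from `ℝ^n` to `d × d` matrices, a linear map
`L` from `d × d` matrices to `ℝ^m`, and a vector `v`, such that for all `x ∈ [a,b]^n` and
all coordinates `j`, `|f(x)_j − (L (exp (A x)) + v)_j| < ε`. -/
theorem mlayer_universal_approximation (n m : ℕ) (a b : ℝ)
    (f : (Fin n → ℝ) → (Fin m → ℝ))
    (hf : ContinuousOn f (Set.pi Set.univ fun _ : Fin n => Set.Icc a b))
    (ε : ℝ) (hε : 0 < ε) :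
    ∃ (d : ℕ) (A : (Fin n → ℝ) →ᵃ[ℝ] Matrix (Fin d) (Fin d) ℝ)
      (L : Matrix (Fin d) (Fin d) ℝ →ₗ[ℝ] (Fin m → ℝ)) (v : Fin m → ℝ),
      ∀ x ∈ Set.pi Set.univ fun _ : Fin n => Set.Icc a b, ∀ j : Fin m,
        |f x j - (L (NormedSpace.exp (A x)) j + v j)| < ε := by
  classical
  have hfj : ∀ j : Fin m, ContinuousOn (fun x => f x j)
      (Set.pi Set.univ fun _ : Fin n => Set.Icc a b) := fun j =>
    (continuous_apply j).comp_continuousOn hf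
  choose k c w t hwt using fun j : Fin m =>
    exp_affine_span_approx n a b (fun x => f x j) (hfj j) ε hε
  -- index everything by a sigma type, then transfer to `Fin d`
  set ι := (j : Fin m) × Fin (k j) with hι
  set d := Fintype.card ι with hd
  set e : Fin d ≃ ι := (Fintype.equivFin ι).symm with he
  -- affine map into diagonal matrices
  set aff : (Fin n → ℝ) →ᵃ[ℝ] (Fin d → ℝ) :=
    { toFun := fun x p => (∑ i', w (e p).1 (e p).2 i' * x i') + t (e p).1 (e p).2
      linear := (Matrix.of fun p i' => w (e p).1 (e p).2 i').mulVecLin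
      map_vadd' := by
        intro p v
        ext q
        simp [Matrix.mulVec, dotProduct, mul_add, Finset.sum_add_distrib]
        ring } with haff
  set A : (Fin n → ℝ) →ᵃ[ℝ] Matrix (Fin d) (Fin d) ℝ :=
    (Matrix.diagonalLinearMap (n := Fin d) (R := ℝ) (α := ℝ)).toAffineMap.comp aff with hA
  set L : Matrix (Fin d) (Fin d) ℝ →ₗ[ℝ] (Fin m → ℝ) :=
    LinearMap.pi fun j => ∑ p : Fin d, (if (e p).1 = j then c (e p).1 (e p).2 else 0) •
      ((LinearMap.proj p).comp
        (LinearMap.proj (R := ℝ) (φ := fun _ : Fin d => Fin d → ℝ) p)) with hL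
  refine ⟨d, A, L, 0, fun x hx j => ?_⟩
  have hAx : A x = Matrix.diagonal (fun p => aff x p) := rfl
  have hexp : NormedSpace.exp (A x) =
      Matrix.diagonal (fun p => Real.exp (aff x p)) := by
    rw [hAx, Matrix.exp_diagonal, Pi.exp_def]
    ext p
    rw [← Real.exp_eq_exp_ℝ]
  have hLval : L (NormedSpace.exp (A x)) j =
      ∑ p : Fin d, (if (e p).1 = j then c (e p).1 (e p).2 else 0) *
        Real.exp ((∑ i', w (e p).1 (e p).2 i' * x i') + t (e p).1 (e p).2) := by
    rw [hexp, hL]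
    rw [LinearMap.pi_apply]
    refine (LinearMap.sum_apply (M := Fin d → Fin d → ℝ) _ _ _).trans ?_
    refine Finset.sum_congr rfl fun p _ => ?_
    show (_ : ℝ) * _ = (_ : ℝ) * _
    congr 1
    exact Matrix.diagonal_apply_eq (fun p => Real.exp (aff x p)) p
  have hsum : (∑ p : Fin d, (if (e p).1 = j then c (e p).1 (e p).2 else 0) *
        Real.exp ((∑ i', w (e p).1 (e p).2 i' * x i') + t (e p).1 (e p).2)) =
      ∑ i, c j i * Real.exp ((∑ i', w j i i' * x i') + t j i) := by
    rw [Fintype.sum_equiv e _ (fun q : ι => (if q.1 = j then c q.1 q.2 else 0) *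
        Real.exp ((∑ i', w q.1 q.2 i' * x i') + t q.1 q.2)) (fun p => rfl)]
    rw [← Finset.univ_sigma_univ, Finset.sum_sigma]
    rw [Finset.sum_eq_single j]
    · simp
    · intro j' _ hj'
      simp [hj']
    · intro h
      exact absurd (Finset.mem_univ j) h
  rw [hLval, hsum]
  simpa using hwt j x hx
end

section
/- Let A be a linear map from ℝ^p (with the sup norm ‖·‖_∞) to the n×n real matrices (with the operator 2-norm), let δ ≥ 0 satisfy ‖A(x̃)‖₂ ≤ δ·‖x̃‖_∞ for all x̃ ∈ ℝ^p, let B be a fixed n×n real matrix, and let S be a linear map from the n×n real matrices (with the Frobenius norm) to Euclidean ℝ^h with operator norm ‖S‖. Then for all x, x̃ ∈ ℝ^p, ‖S(exp(B + A(x + x̃))) − S(exp(B + A(x)))‖₂ ≤ √n · ‖S‖ · δ · ‖x̃‖_∞ · exp(δ·‖x̃‖_∞) · exp(‖B + A(x)‖₂). -/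
attribute [local instance] Matrix.frobeniusNormedAddCommGroup Matrix.frobeniusNormedSpace

/-- The operator 2-norm of a real `n × n` matrix: its norm as a linear operator on
Euclidean space `ℝ^n`. -/
noncomputable def l2OpNorm {n : ℕ} (M : Matrix (Fin n) (Fin n) ℝ) : ℝ :=
  ‖Matrix.toEuclideanCLM (𝕜 := ℝ) M‖

theorem frobenius_le_sqrt_card_mul_l2OpNorm (n : ℕ) (M : Matrix (Fin n) (Fin n) ℝ) :
    ‖M‖ ≤ Real.sqrt n * l2OpNorm M := by
  have hop : 0 ≤ l2OpNorm M := norm_nonneg _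
  have hcol : ∀ j : Fin n, ∑ i, ‖M i j‖ ^ 2 ≤ l2OpNorm M ^ 2 := by
    intro j
    have h := (Matrix.toEuclideanCLM (𝕜 := ℝ) M).le_opNorm (EuclideanSpace.single j (1 : ℝ))
    rw [EuclideanSpace.norm_single, norm_one, mul_one] at h
    have happ : Matrix.toEuclideanCLM (𝕜 := ℝ) M (EuclideanSpace.single j (1 : ℝ)) =
        (WithLp.equiv 2 _).symm (M.mulVec (Pi.single j 1)) := by
      rfl
    rw [happ] at h
    have hnorm : ‖(WithLp.equiv 2 (Fin n → ℝ)).symm (M.mulVec (Pi.single j 1))‖ =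
        Real.sqrt (∑ i, ‖M i j‖ ^ 2) := by
      rw [EuclideanSpace.norm_eq]
      congr 1
      refine Finset.sum_congr rfl fun i _ => ?_
      simp [Matrix.mulVec_single]
    rw [hnorm] at h
    calc ∑ i, ‖M i j‖ ^ 2 = Real.sqrt (∑ i, ‖M i j‖ ^ 2) ^ 2 := by
          rw [Real.sq_sqrt]; positivity
      _ ≤ l2OpNorm M ^ 2 := by
          have h0 : (0:ℝ) ≤ Real.sqrt (∑ i, ‖M i j‖ ^ 2) := Real.sqrt_nonneg _
          exact pow_le_pow_left₀ h0 h 2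
  have hfro : ‖M‖ = Real.sqrt (∑ i, ∑ j, ‖M i j‖ ^ 2) := by
    rw [Matrix.frobenius_norm_def, Real.sqrt_eq_rpow]
    congr 1
    refine Finset.sum_congr rfl fun i _ => Finset.sum_congr rfl fun j _ => ?_
    rw [Real.rpow_two]
  rw [hfro]
  calc Real.sqrt (∑ i, ∑ j, ‖M i j‖ ^ 2)
      ≤ Real.sqrt ((n : ℝ) * l2OpNorm M ^ 2) := by
        apply Real.sqrt_le_sqrt
        rw [Finset.sum_comm]
        calc ∑ j, ∑ i, ‖M i j‖ ^ 2 ≤ ∑ _j : Fin n, l2OpNorm M ^ 2 :=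
              Finset.sum_le_sum fun j _ => hcol j
          _ = (n : ℝ) * l2OpNorm M ^ 2 := by simp [Finset.sum_const, mul_comm]
    _ = Real.sqrt n * l2OpNorm M := by
        rw [Real.sqrt_mul (by positivity), Real.sqrt_sq hop]

theorem toEuclideanCLM_exp (n : ℕ) (M : Matrix (Fin n) (Fin n) ℝ) :
    NormedSpace.exp M = (Matrix.toEuclideanCLM (𝕜 := ℝ) (n := Fin n)).symm
      (NormedSpace.exp (Matrix.toEuclideanCLM (𝕜 := ℝ) M)) := by
  set Φ := Matrix.toEuclideanCLM (𝕜 := ℝ) (n := Fin n) with hΦ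
  have hcont : Continuous (Φ.symm :
      (EuclideanSpace ℝ (Fin n) →L[ℝ] EuclideanSpace ℝ (Fin n)) → Matrix (Fin n) (Fin n) ℝ) := by
    have : Continuous ((LinearMap.mk (AddHom.mk (Φ.symm : _ → _) (map_add _)) (map_smul _) :
        (EuclideanSpace ℝ (Fin n) →L[ℝ] EuclideanSpace ℝ (Fin n)) →ₗ[ℝ]
          Matrix (Fin n) (Fin n) ℝ) : _ → _) :=
      LinearMap.continuous_of_finiteDimensional _
    exact this
  have hsum : HasSum (fun k : ℕ => (k.factorial : ℝ)⁻¹ • (Φ M) ^ k)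
      (NormedSpace.exp (Φ M)) := NormedSpace.exp_series_hasSum_exp' (Φ M)
  have h2 : HasSum (fun k : ℕ => (k.factorial : ℝ)⁻¹ • M ^ k)
      (Φ.symm (NormedSpace.exp (Φ M))) := by
    have h3 := hsum.map (Φ.symm : _ ≃⋆ₐ[ℝ] _) hcont
    convert h3 using 1
    funext k
    show (k.factorial : ℝ)⁻¹ • M ^ k = Φ.symm ((k.factorial : ℝ)⁻¹ • (Φ M) ^ k)
    rw [map_smul, map_pow, StarAlgEquiv.symm_apply_apply]
  rw [NormedSpace.exp_eq_tsum ℝ]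
  exact h2.tsum_eq

-- telescoping identity in a ring
theorem pow_sub_pow_telescope {R : Type*} [Ring R] (x y : R) :
    ∀ k : ℕ, x ^ k - y ^ k = ∑ i ∈ Finset.range k, x ^ i * (x - y) * y ^ (k - 1 - i) := by
  intro k
  induction k with
  | zero => simp
  | succ k ih =>
    rw [Finset.sum_range_succ', pow_succ', pow_succ']
    have : x * x ^ k - y * y ^ k = x * (x ^ k - y ^ k) + (x - y) * y ^ k := by noncomm_ring
    rw [this, ih, Finset.mul_sum]
    congr 1
    · refine Finset.sum_congr rfl fun i hi => ?_
      have : k + 1 - 1 - (i + 1) = k - 1 - i := by omega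
      rw [this]; simp only [pow_add, pow_one, mul_assoc]; rw [← mul_assoc, ← mul_assoc, ((Commute.refl x).pow_right i).eq]; simp [mul_assoc]
    · simp

theorem norm_exp_sub_exp_le' {𝔸 : Type*} [NormedRing 𝔸] [NormedAlgebra ℝ 𝔸] [CompleteSpace 𝔸]
    (hone : ‖(1 : 𝔸)‖ ≤ 1) (X E : 𝔸) :
    ‖NormedSpace.exp (X + E) - NormedSpace.exp X‖ ≤ ‖E‖ * Real.exp ‖E‖ * Real.exp ‖X‖ := by
  set s : ℝ := ‖X‖ + ‖E‖ with hs
  have hs0 : 0 ≤ s := by positivity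
  have hpow : ∀ (a : 𝔸) (i : ℕ), ‖a‖ ≤ s → ‖a ^ i‖ ≤ s ^ i := by
    intro a i ha
    cases i with
    | zero => simpa using hone
    | succ m => exact (norm_pow_le' a (Nat.succ_pos m)).trans (pow_le_pow_left₀ (norm_nonneg a) ha _)
  set g : ℕ → ℝ := fun k => (k : ℝ) * ‖E‖ * s ^ (k - 1) / k.factorial with hg_def
  have hterm : ∀ k : ℕ, ‖((k.factorial : ℝ)⁻¹) • ((X + E) ^ k - X ^ k)‖ ≤ g k := by
    intro k
    rw [norm_smul, norm_inv, Real.norm_natCast]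
    have h1 : ‖(X + E) ^ k - X ^ k‖ ≤ (k : ℝ) * ‖E‖ * s ^ (k - 1) := by
      rw [pow_sub_pow_telescope]
      refine (norm_sum_le _ _).trans ?_
      have hb : ∀ i ∈ Finset.range k,
          ‖(X + E) ^ i * ((X + E) - X) * X ^ (k - 1 - i)‖ ≤ ‖E‖ * s ^ (k - 1) := by
        intro i hi
        have hi' : i < k := Finset.mem_range.mp hi
        have hXE : ‖X + E‖ ≤ s := norm_add_le X E
        have hX : ‖X‖ ≤ s := by simp [hs, norm_nonneg]
        calc ‖(X + E) ^ i * ((X + E) - X) * X ^ (k - 1 - i)‖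
            ≤ ‖(X + E) ^ i‖ * ‖(X + E) - X‖ * ‖X ^ (k - 1 - i)‖ :=
              (norm_mul_le _ _).trans
                (mul_le_mul_of_nonneg_right (norm_mul_le _ _) (norm_nonneg _))
          _ ≤ s ^ i * ‖E‖ * s ^ (k - 1 - i) := by
              rw [add_sub_cancel_left]
              exact mul_le_mul
                (mul_le_mul (hpow (X + E) i hXE) le_rfl (norm_nonneg _) (pow_nonneg hs0 i))
                (hpow X (k - 1 - i) hX) (norm_nonneg _) (by positivity)
          _ = ‖E‖ * s ^ (k - 1) := by
              rw [mul_comm (s ^ i) ‖E‖, mul_assoc, ← pow_add]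
              congr 2
              omega
      refine (Finset.sum_le_sum hb).trans ?_
      rw [Finset.sum_const, Finset.card_range, nsmul_eq_mul]
      ring_nf
      exact le_refl _
    calc ((k.factorial : ℝ))⁻¹ * ‖(X + E) ^ k - X ^ k‖
        ≤ ((k.factorial : ℝ))⁻¹ * ((k : ℝ) * ‖E‖ * s ^ (k - 1)) := by
          exact mul_le_mul_of_nonneg_left h1 (by positivity)
      _ = g k := by rw [hg_def]; field_simp
  have hexp : HasSum (fun k : ℕ => s ^ k / k.factorial) (Real.exp s) := by
    rw [Real.exp_eq_exp_ℝ]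
    exact NormedSpace.expSeries_div_hasSum_exp s
  have hG : HasSum (fun k : ℕ => ‖E‖ * (s ^ k / k.factorial)) (‖E‖ * Real.exp s) :=
    hexp.mul_left _
  have hg : HasSum g (‖E‖ * Real.exp s) := by
    have hinj : Function.Injective (fun k : ℕ => k + 1) := fun a b hab => by simpa using hab
    rw [← Function.Injective.hasSum_iff hinj ?_]
    · convert hG using 1
      funext k
      show g (k + 1) = ‖E‖ * (s ^ k / k.factorial)
      rw [hg_def]
      simp only [Nat.add_sub_cancel, Nat.factorial_succ, Nat.cast_mul, Nat.cast_add, Nat.cast_one]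
      have hk : ((k : ℝ) + 1) ≠ 0 := by positivity
      have hf : ((k.factorial : ℝ)) ≠ 0 := by positivity
      field_simp
    · intro x hx
      have hx0 : x = 0 := by
        by_contra hc
        exact hx ⟨x - 1, by show x - 1 + 1 = x; omega⟩
      rw [hg_def, hx0]
      simp
  have hA := NormedSpace.exp_series_hasSum_exp' (𝕂 := ℝ) (X + E)
  have hB := NormedSpace.exp_series_hasSum_exp' (𝕂 := ℝ) X
  have hdiff := hA.sub hB
  simp only [← smul_sub] at hdiff
  have hsum_norm : Summable fun k : ℕ => ‖((k.factorial : ℝ)⁻¹) • ((X + E) ^ k - X ^ k)‖ :=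
    Summable.of_nonneg_of_le (fun k => norm_nonneg _) hterm hg.summable
  have h3 : ‖NormedSpace.exp (X + E) - NormedSpace.exp X‖ ≤ ‖E‖ * Real.exp s := by
    rw [← hdiff.tsum_eq]
    calc ‖∑' k : ℕ, ((k.factorial : ℝ)⁻¹) • ((X + E) ^ k - X ^ k)‖
        ≤ ∑' k : ℕ, ‖((k.factorial : ℝ)⁻¹) • ((X + E) ^ k - X ^ k)‖ :=
          norm_tsum_le_tsum_norm hsum_norm
      _ ≤ ∑' k, g k := Summable.tsum_le_tsum hterm hsum_norm hg.summable
      _ = ‖E‖ * Real.exp s := hg.tsum_eq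
  calc ‖NormedSpace.exp (X + E) - NormedSpace.exp X‖ ≤ ‖E‖ * Real.exp s := h3
    _ = ‖E‖ * Real.exp ‖E‖ * Real.exp ‖X‖ := by rw [hs, Real.exp_add]; ring

/-- Certified robustness of the M-layer: if `A` is linear from `ℝ^p` (sup norm) to `n × n`
matrices with `‖A z‖₂ ≤ δ ‖z‖_∞`, `B` is a fixed matrix, and `S` is a linear map from
matrices (Frobenius norm) to Euclidean `ℝ^h`, then for all inputs `x` and perturbations `z`,
`‖S (exp (B + A (x + z))) − S (exp (B + A x))‖₂ ≤
  √n · ‖S‖ · δ · ‖z‖_∞ · exp (δ ‖z‖_∞) · exp ‖B + A x‖₂`.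
(The norm `‖z‖` on `Fin p → ℝ` is the sup norm, Mathlib's default Pi norm.) -/
theorem mlayer_certified_robustness (p n h : ℕ)
    (A : (Fin p → ℝ) →ₗ[ℝ] Matrix (Fin n) (Fin n) ℝ)
    (δ : ℝ) (hδ : 0 ≤ δ)
    (hA : ∀ z : Fin p → ℝ, l2OpNorm (A z) ≤ δ * ‖z‖)
    (B : Matrix (Fin n) (Fin n) ℝ)
    (S : Matrix (Fin n) (Fin n) ℝ →L[ℝ] EuclideanSpace ℝ (Fin h)) :
    ∀ x z : Fin p → ℝ,
      ‖S (NormedSpace.exp (B + A (x + z))) - S (NormedSpace.exp (B + A x))‖ ≤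
        Real.sqrt n * @Norm.norm _ (ContinuousLinearMap.hasOpNorm (σ₁₂ := RingHom.id ℝ)) S * (δ * ‖z‖) * Real.exp (δ * ‖z‖) *
          Real.exp (l2OpNorm (B + A x)) := by
  intro x z
  letI : SeminormedAddCommGroup (Matrix (Fin n) (Fin n) ℝ →L[ℝ] EuclideanSpace ℝ (Fin h)) :=
    ContinuousLinearMap.toSeminormedAddCommGroup (σ₁₂ := RingHom.id ℝ)
  set Φ := Matrix.toEuclideanCLM (𝕜 := ℝ) (n := Fin n) with hΦ
  set X := B + A x with hX
  set E := A z with hE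
  have hBE : B + A (x + z) = X + E := by rw [map_add, ← add_assoc]
  have hone : ‖(1 : EuclideanSpace ℝ (Fin n) →L[ℝ] EuclideanSpace ℝ (Fin n))‖ ≤ 1 := by
    rw [ContinuousLinearMap.one_def]
    exact ContinuousLinearMap.norm_id_le
  -- the difference of matrix exponentials, transferred to CLMs
  set T := NormedSpace.exp (Φ X + Φ E) - NormedSpace.exp (Φ X) with hT
  have hdiff : NormedSpace.exp (X + E) - NormedSpace.exp X = Φ.symm T := by
    rw [toEuclideanCLM_exp, toEuclideanCLM_exp, ← map_sub, map_add]
  have hTbound : ‖T‖ ≤ l2OpNorm E * Real.exp (l2OpNorm E) * Real.exp (l2OpNorm X) :=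
    norm_exp_sub_exp_le' hone (Φ X) (Φ E)
  have hfro : ‖NormedSpace.exp (X + E) - NormedSpace.exp X‖ ≤ Real.sqrt n * ‖T‖ := by
    rw [hdiff]
    have := frobenius_le_sqrt_card_mul_l2OpNorm n (Φ.symm T)
    rwa [show l2OpNorm (Φ.symm T) = ‖T‖ by
      unfold l2OpNorm; rw [← hΦ, StarAlgEquiv.apply_symm_apply]] at this
  have hq : l2OpNorm E ≤ δ * ‖z‖ := hA z
  have hqE : l2OpNorm E * Real.exp (l2OpNorm E) ≤ δ * ‖z‖ * Real.exp (δ * ‖z‖) := by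
    have h0 : (0:ℝ) ≤ l2OpNorm E := norm_nonneg _
    exact mul_le_mul hq (Real.exp_le_exp.mpr hq) (Real.exp_pos _).le (by positivity)
  calc ‖S (NormedSpace.exp (B + A (x + z))) - S (NormedSpace.exp (B + A x))‖
      = ‖S (NormedSpace.exp (X + E) - NormedSpace.exp X)‖ := by
        rw [map_sub, hBE]
    _ ≤ ‖S‖ * ‖NormedSpace.exp (X + E) - NormedSpace.exp X‖ := S.le_opNorm _
    _ ≤ ‖S‖ * (Real.sqrt n * ‖T‖) := by
        exact mul_le_mul_of_nonneg_left hfro (norm_nonneg S)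
    _ ≤ ‖S‖ * (Real.sqrt n * (l2OpNorm E * Real.exp (l2OpNorm E) * Real.exp (l2OpNorm X))) := by
        have hn : (0:ℝ) ≤ Real.sqrt n := Real.sqrt_nonneg _
        exact mul_le_mul_of_nonneg_left
          (mul_le_mul_of_nonneg_left hTbound hn) (norm_nonneg S)
    _ ≤ ‖S‖ * (Real.sqrt n * (δ * ‖z‖ * Real.exp (δ * ‖z‖) * Real.exp (l2OpNorm X))) := by
        have hn : (0:ℝ) ≤ Real.sqrt n := Real.sqrt_nonneg _
        refine mul_le_mul_of_nonneg_left (mul_le_mul_of_nonneg_left ?_ hn) (norm_nonneg S)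
        exact mul_le_mul_of_nonneg_right hqE (Real.exp_pos _).le
    _ = Real.sqrt n * ‖S‖ * (δ * ‖z‖) * Real.exp (δ * ‖z‖) * Real.exp (l2OpNorm (B + A x)) := by
        rw [← hX]; ring
end

section
/- For every 3×3 real matrix with entries a, b, c (first row), d, e, f (second row), g, h, i (third row), let M be the 8×8 real matrix whose only nonzero entries are: M_{0,2}=i, M_{0,3}=f, M_{1,2}=h, M_{1,3}=e, M_{2,4}=2d, M_{2,5}=−2f, M_{3,4}=−2g, M_{3,5}=2i, M_{4,6}=3c, M_{4,7}=−3b, M_{5,6}=3a. Then exp(M)_{0,7} + exp(M)_{1,6} = aei − afh − bdi + bfg + cdh − ceg, which is exactly the determinant of the given 3×3 matrix. -/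
namespace Matrix
@[simp] lemma cons_val_five' {α : Type*} {m : ℕ} (x : α) (u : Fin (m+5) → α) :
    vecCons x u 5 = vecHead (vecTail (vecTail (vecTail (vecTail u)))) := rfl
@[simp] lemma cons_val_six' {α : Type*} {m : ℕ} (x : α) (u : Fin (m+6) → α) :
    vecCons x u 6 = vecHead (vecTail (vecTail (vecTail (vecTail (vecTail u))))) := rfl
@[simp] lemma cons_val_seven' {α : Type*} {m : ℕ} (x : α) (u : Fin (m+7) → α) :
    vecCons x u 7 = vecHead (vecTail (vecTail (vecTail (vecTail (vecTail (vecTail u)))))) := rfl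
end Matrix

set_option maxHeartbeats 3200000 in
/-- For the `8 × 8` matrix `M` built from the entries of a `3 × 3` matrix as in the paper,
`exp(M)₀,₇ + exp(M)₁,₆` equals `aei − afh − bdi + bfg + cdh − ceg`, which is exactly the
determinant of the `3 × 3` matrix. -/
theorem exp_eight_by_eight_computes_det (a b c d e f g h i : ℝ) :
    NormedSpace.exp
        (!![0, 0, i, f, 0, 0, 0, 0;
            0, 0, h, e, 0, 0, 0, 0;
            0, 0, 0, 0, 2*d, -(2*f), 0, 0;
            0, 0, 0, 0, -(2*g), 2*i, 0, 0;
            0, 0, 0, 0, 0, 0, 3*c, -(3*b);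
            0, 0, 0, 0, 0, 0, 3*a, 0;
            0, 0, 0, 0, 0, 0, 0, 0;
            0, 0, 0, 0, 0, 0, 0, 0] : Matrix (Fin 8) (Fin 8) ℝ) 0 7 +
      NormedSpace.exp
        (!![0, 0, i, f, 0, 0, 0, 0;
            0, 0, h, e, 0, 0, 0, 0;
            0, 0, 0, 0, 2*d, -(2*f), 0, 0;
            0, 0, 0, 0, -(2*g), 2*i, 0, 0;
            0, 0, 0, 0, 0, 0, 3*c, -(3*b);
            0, 0, 0, 0, 0, 0, 3*a, 0;
            0, 0, 0, 0, 0, 0, 0, 0;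
            0, 0, 0, 0, 0, 0, 0, 0] : Matrix (Fin 8) (Fin 8) ℝ) 1 6 =
      a*e*i - a*f*h - b*d*i + b*f*g + c*d*h - c*e*g ∧
    (!![a, b, c; d, e, f; g, h, i] : Matrix (Fin 3) (Fin 3) ℝ).det =
      a*e*i - a*f*h - b*d*i + b*f*g + c*d*h - c*e*g := by
  set M : Matrix (Fin 8) (Fin 8) ℝ :=
      !![0, 0, i, f, 0, 0, 0, 0;
         0, 0, h, e, 0, 0, 0, 0;
         0, 0, 0, 0, 2*d, -(2*f), 0, 0;
         0, 0, 0, 0, -(2*g), 2*i, 0, 0;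
         0, 0, 0, 0, 0, 0, 3*c, -(3*b);
         0, 0, 0, 0, 0, 0, 3*a, 0;
         0, 0, 0, 0, 0, 0, 0, 0;
         0, 0, 0, 0, 0, 0, 0, 0] with hMdef
  have hN : M * M =
      !![0, 0, 0, 0, 2*d*i - 2*f*g, 0, 0, 0;
         0, 0, 0, 0, 2*d*h - 2*e*g, 2*e*i - 2*f*h, 0, 0;
         0, 0, 0, 0, 0, 0, 6*c*d - 6*a*f, -(6*b*d);
         0, 0, 0, 0, 0, 0, 6*a*i - 6*c*g, 6*b*g;
         0, 0, 0, 0, 0, 0, 0, 0;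
         0, 0, 0, 0, 0, 0, 0, 0;
         0, 0, 0, 0, 0, 0, 0, 0;
         0, 0, 0, 0, 0, 0, 0, 0] := by
    rw [hMdef]
    ext p q
    fin_cases p <;> fin_cases q <;>
      (simp [Matrix.mul_apply, Fin.sum_univ_eight, Matrix.vecHead, Matrix.vecTail]; try ring)
  have hM4 : M ^ 4 = 0 := by
    have h4 : M ^ 4 = (M * M) * (M * M) := by
      rw [show (4:ℕ)=2+2 from rfl, pow_add, pow_two]
    rw [h4, hN]
    ext p q
    fin_cases p <;> fin_cases q <;>
      simp [Matrix.mul_apply, Fin.sum_univ_eight, Matrix.vecHead, Matrix.vecTail]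
  have hexp : NormedSpace.exp M =
      ∑ n ∈ Finset.range 4, ((Nat.factorial n : ℝ))⁻¹ • M ^ n := by
    rw [NormedSpace.exp_eq_tsum ℝ]
    exact tsum_eq_sum (fun n hn => by
      rw [pow_eq_zero_of_le (Nat.le_of_not_lt (by simpa using hn)) hM4, smul_zero])
  refine ⟨?_, by simp [Matrix.det_fin_three]; try ring⟩
  rw [hexp]
  have hM3 : M ^ 3 = (M * M) * M := by rw [pow_succ, pow_two]
  have hM2 : M ^ 2 = M * M := pow_two M
  rw [show (4:ℕ) = 3+1 from rfl]
  simp only [Finset.sum_range_succ, Finset.sum_range_zero, Matrix.add_apply,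
    Matrix.smul_apply, Matrix.zero_apply, zero_add, pow_zero, pow_one]
  rw [hM2, hM3, hN, hMdef]
  norm_num [Matrix.mul_apply, Fin.sum_univ_eight, Matrix.vecHead, Matrix.vecTail,
    Matrix.one_apply, Nat.factorial]
  rw [if_neg (by decide), if_neg (by decide)]
  simp [Matrix.cons_val]
  ring
end

section
/- Let the entries of a random n×n real matrix X be independent and each uniformly distributed on the interval [−1, 1]. Then the expected value of the square of the determinant of X equals n!/3^n. -/
open MeasureTheory

noncomputable def unifM : Measure ℝ := (2⁻¹ : ENNReal) • volume.restrict (Set.Icc (-1 : ℝ) 1)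

lemma unif_moment (k : ℕ) :
    ∫ x, x ^ k ∂unifM = (1 - (-1:ℝ)^(k+1)) / (2*(k+1)) := by
  rw [unifM, integral_smul_measure]
  rw [integral_Icc_eq_integral_Ioc, ← intervalIntegral.integral_of_le (by norm_num : (-1:ℝ) ≤ 1)]
  rw [integral_pow]
  simp only [one_pow, ENNReal.toReal_inv, ENNReal.toReal_ofNat, smul_eq_mul]
  have h : ((k:ℝ) + 1) ≠ 0 := by positivity
  field_simp

instance : IsProbabilityMeasure unifM := by
  constructor
  rw [unifM]
  simp [Real.volume_Icc]
  rw [show (1:ℝ) + 1 = 2 by norm_num]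
  rw [ENNReal.ofReal_ofNat]
  simp [ENNReal.inv_mul_cancel]

lemma unif_integrable_pow (k : ℕ) : Integrable (fun t : ℝ => t ^ k) unifM := by
  rw [unifM]
  have h : Integrable (fun t : ℝ => t ^ k) (volume.restrict (Set.Icc (-1:ℝ) 1)) :=
    (continuous_pow k).integrableOn_Icc
  exact h.smul_measure (by norm_num)

lemma unif_m1 : ∫ x, x ^ 1 ∂unifM = 0 := by rw [unif_moment]; norm_num
lemma unif_m2 : ∫ x, x ^ 2 ∂unifM = 3⁻¹ := by rw [unif_moment]; norm_num
lemma unif_m0 : ∫ x, x ^ 0 ∂unifM = 1 := by rw [unif_moment]; norm_num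

lemma pi_integral {ι : Type*} [Fintype ι] {E : Type*} [MeasurableSpace E]
    (μ : Measure E) [SigmaFinite μ] (f : ι → E → ℝ) :
    ∫ x : ι → E, ∏ i, f i (x i) ∂(Measure.pi fun _ => μ) = ∏ i, ∫ x, f i x ∂μ := by
  letI : MeasureSpace E := ⟨μ⟩
  exact integral_fintype_prod_eq_prod (μ := fun _ => μ) f

lemma pi_integrable {ι : Type*} [Fintype ι] {E : Type*} [MeasurableSpace E]
    (μ : Measure E) [SigmaFinite μ] (f : ι → E → ℝ) (hf : ∀ i, Integrable (f i) μ) :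
    Integrable (fun x : ι → E => ∏ i, f i (x i)) (Measure.pi fun _ => μ) := by
  letI : MeasureSpace E := ⟨μ⟩
  exact Integrable.fintype_prod hf

/-- If the entries of a random `n × n` real matrix are i.i.d. uniform on `[-1, 1]`
(the measure `2⁻¹ • volume.restrict (Icc (-1) 1)` in each coordinate), then the expected
value of the square of its determinant is `n! / 3^n`. -/
theorem expected_sq_det_uniform (n : ℕ) :
    ∫ X : Matrix (Fin n) (Fin n) ℝ, (X.det) ^ 2
        ∂(Measure.pi fun _ : Fin n => Measure.pi fun _ : Fin n =>
            (2⁻¹ : ENNReal) • volume.restrict (Set.Icc (-1 : ℝ) 1)) =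
      (Nat.factorial n : ℝ) / 3 ^ n := by
  have hμ : ((2⁻¹ : ENNReal) • volume.restrict (Set.Icc (-1 : ℝ) 1)) = unifM := rfl
  rw [hμ]
  set μ := unifM with hμdef
  set P1 : Measure (Fin n → ℝ) := Measure.pi fun _ => μ with hP1
  -- notation
  set s : Equiv.Perm (Fin n) → ℝ := fun σ => ((Equiv.Perm.sign σ : ℤ) : ℝ) with hs
  set e : Equiv.Perm (Fin n) → Equiv.Perm (Fin n) → Fin n → Fin n → ℕ :=
    fun σ τ r c => (if σ c = r then 1 else 0) + (if τ c = r then 1 else 0) with he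
  -- pointwise expansion
  have key : ∀ X : Matrix (Fin n) (Fin n) ℝ,
      (X.det) ^ 2 = ∑ σ : Equiv.Perm (Fin n), ∑ τ : Equiv.Perm (Fin n),
        (s σ * s τ) * ∏ r, ∏ c, X r c ^ (e σ τ r c) := by
    intro X
    rw [Matrix.det_apply', sq, Finset.sum_mul_sum]
    refine Finset.sum_congr rfl fun σ _ => Finset.sum_congr rfl fun τ _ => ?_
    have hprod : ∀ ρ : Equiv.Perm (Fin n),
        (∏ r, ∏ c, X r c ^ (if ρ c = r then 1 else 0)) = ∏ c, X (ρ c) c := by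
      intro ρ
      rw [Finset.prod_comm]
      refine Finset.prod_congr rfl fun c _ => ?_
      simp [pow_ite, Finset.prod_ite_eq]
    simp only [he, pow_add, Finset.prod_mul_distrib, hprod]
    ring
  simp only [key]
  -- integrability
  have hint : ∀ σ τ : Equiv.Perm (Fin n),
      Integrable (fun X : Matrix (Fin n) (Fin n) ℝ =>
        (s σ * s τ) * ∏ r, ∏ c, X r c ^ (e σ τ r c)) (Measure.pi fun _ => P1) := by
    intro σ τ
    exact (pi_integrable P1 (fun r row => ∏ c, row c ^ (e σ τ r c))
      (fun r => pi_integrable μ _ (fun c => unif_integrable_pow _))).const_mul _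
  refine (integral_finset_sum _ (fun σ _ => integrable_finset_sum _ (fun τ _ => hint σ τ))).trans ?_
  have swap2 : ∀ σ : Equiv.Perm (Fin n), (∫ X : Matrix (Fin n) (Fin n) ℝ,
      ∑ τ : Equiv.Perm (Fin n), (s σ * s τ) * ∏ r, ∏ c, X r c ^ (e σ τ r c)
        ∂(Measure.pi fun _ => P1)) =
      ∑ τ : Equiv.Perm (Fin n), (s σ * s τ) * ∏ r, ∏ c, ∫ t, t ^ (e σ τ r c) ∂μ := by
    intro σ
    refine (integral_finset_sum _ (fun τ _ => hint σ τ)).trans ?_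
    refine Finset.sum_congr rfl fun τ _ => ?_
    refine (integral_const_mul _ _).trans ?_
    congr 1
    change ∫ X : (Fin n) → (Fin n) → ℝ, ∏ r, (fun row => ∏ c, row c ^ (e σ τ r c)) (X r)
        ∂(Measure.pi fun _ => P1) = _
    rw [pi_integral P1 (fun r row => ∏ c, row c ^ (e σ τ r c))]
    exact Finset.prod_congr rfl fun r _ => pi_integral μ (fun c t => t ^ (e σ τ r c))
  refine (Finset.sum_congr rfl fun σ _ => swap2 σ).trans ?_
  -- evaluate the double sum
  have hdiag : ∀ σ : Equiv.Perm (Fin n),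
      (∑ τ : Equiv.Perm (Fin n), (s σ * s τ) * ∏ r, ∏ c, ∫ t, t ^ (e σ τ r c) ∂μ)
        = (3:ℝ)⁻¹ ^ n := by
    intro σ
    rw [Finset.sum_eq_single σ]
    · have h1 : s σ * s σ = 1 := by
        rcases Int.units_eq_one_or (Equiv.Perm.sign σ) with h | h <;> simp [hs, h]
      rw [h1, one_mul, Finset.prod_comm]
      have : ∀ c : Fin n, (∏ r, ∫ t, t ^ (e σ σ r c) ∂μ) = 3⁻¹ := by
        intro c
        have he2 : ∀ r, e σ σ r c = if σ c = r then 2 else 0 := by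
          intro r; simp only [he]; split_ifs <;> rfl
        simp only [he2]
        calc (∏ r, ∫ t, t ^ (if σ c = r then 2 else 0) ∂μ)
            = ∏ r, (if σ c = r then (3:ℝ)⁻¹ else 1) := by
              refine Finset.prod_congr rfl fun r _ => ?_
              split_ifs
              · exact unif_m2
              · exact unif_m0
          _ = 3⁻¹ := by simp [Finset.prod_ite_eq]
      simp [this]
    · intro τ _ hτ
      have hc : ∃ c, σ c ≠ τ c := by
        by_contra h
        push_neg at h
        exact hτ (Equiv.ext h).symm
      obtain ⟨c, hc⟩ := hc
      refine mul_eq_zero_of_right _ ?_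
      refine Finset.prod_eq_zero (Finset.mem_univ (σ c)) ?_
      refine Finset.prod_eq_zero (Finset.mem_univ c) ?_
      have : e σ τ (σ c) c = 1 := by
        simp [he, Ne.symm hc]
      rw [this]
      exact unif_m1
    · intro h
      exact absurd (Finset.mem_univ σ) h
  simp only [hdiag]
  rw [Finset.sum_const, Finset.card_univ, Fintype.card_perm, Fintype.card_fin]
  rw [nsmul_eq_mul, inv_pow, div_eq_mul_inv]
end
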